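/- Let rtube₁ = {(Xᵢ, [τᵢ₋₁, τᵢ])}ᵢ₌₁ʲ be a (K₁, p, [0, T₁])-reachtube and rtube₂ = {(Yᵢ, [σᵢ₋₁, σᵢ])}ᵢ₌₁ᵏ be a (K₂, p, [0, T₂])-reachtube of the same time-invariant system, where K₂ ⊇ Reach(K₁, p, T₁) (the reachset at exactly time T₁). Then the concatenation rtube₁ ⌢ timeShift(rtube₂, T₁), given by {(Xᵢ,[τᵢ₋₁,τᵢ])}ᵢ₌₁ʲ followed by {(Yᵢ,[T₁+σᵢ₋₁, T₁+σᵢ])}ᵢ₌₁ᵏ, is a (K₁, p, [0, T₁+T₂])-reachtube. -/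
import Mathlib


/-- Reachable states over a time interval `[a, b]` of the flow `ξ` with parameter `p`. -/
def Reach {n : ℕ} {P : Type*} (ξ : (Fin n → ℝ) → P → ℝ → (Fin n → ℝ))
    (K : Set (Fin n → ℝ)) (p : P) (a b : ℝ) : Set (Fin n → ℝ) :=
  {x | ∃ x₀ ∈ K, ∃ t ∈ Set.Icc a b, x = ξ x₀ p t}

/-- `(X, τ)` with `j` pieces is a `(K, p, [a,b])`-reachtube. -/
def IsReachtube {n : ℕ} {P : Type*} (ξ : (Fin n → ℝ) → P → ℝ → (Fin n → ℝ))
    (K : Set (Fin n → ℝ)) (p : P) (a b : ℝ)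
    (j : ℕ) (X : ℕ → Set (Fin n → ℝ)) (τ : ℕ → ℝ) : Prop :=
  τ 0 = a ∧ τ j = b ∧ (∀ i < j, τ i < τ (i + 1)) ∧
    ∀ i < j, Reach ξ K p (τ i) (τ (i + 1)) ⊆ X i

/-- Concatenation of reachtubes. If `rtube₁` is a `(K₁,p,[0,T₁])`-reachtube,
`rtube₂` a `(K₂,p,[0,T₂])`-reachtube, the flow satisfies the semigroup property, and
`K₂ ⊇ Reach(K₁,p,T₁)` (the reachset at exactly time `T₁`), then
`rtube₁ ⌢ timeShift(rtube₂, T₁)` is a `(K₁, p, [0, T₁+T₂])`-reachtube. -/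
theorem stmt_11 {n : ℕ} {P : Type*}
    (ξ : (Fin n → ℝ) → P → ℝ → (Fin n → ℝ))
    (hsemi : ∀ (x₀ : Fin n → ℝ) (p : P) (s t : ℝ), 0 ≤ s → 0 ≤ t →
      ξ x₀ p (s + t) = ξ (ξ x₀ p s) p t)
    (K₁ K₂ : Set (Fin n → ℝ)) (p : P) (T₁ T₂ : ℝ) (hT₁ : 0 ≤ T₁) (hT₂ : 0 ≤ T₂)
    (j k : ℕ) (X Y : ℕ → Set (Fin n → ℝ)) (τ σ : ℕ → ℝ)
    (htube₁ : IsReachtube ξ K₁ p 0 T₁ j X τ)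
    (htube₂ : IsReachtube ξ K₂ p 0 T₂ k Y σ)
    (hK₂ : Reach ξ K₁ p T₁ T₁ ⊆ K₂) :
    IsReachtube ξ K₁ p 0 (T₁ + T₂) (j + k)
      (fun i => if i < j then X i else Y (i - j))
      (fun i => if i ≤ j then τ i else T₁ + σ (i - j)) := by
  obtain ⟨hτ0, hτj, hτmono, hτreach⟩ := htube₁
  obtain ⟨hσ0, hσk, hσmono, hσreach⟩ := htube₂
  have hσnn : ∀ m ≤ k, 0 ≤ σ m := by
    intro m hm
    induction m with
    | zero => simp [hσ0]
    | succ m ih =>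
      have h1 : m < k := Nat.lt_of_succ_le hm
      exact le_of_lt (lt_of_le_of_lt (ih h1.le) (hσmono m h1))
  refine ⟨by simp [hτ0], ?_, ?_, ?_⟩
  · rcases Nat.eq_zero_or_pos k with hk | hk
    · subst hk; simp only [Nat.add_zero, le_refl, if_pos, hτj]
      rw [← hσk, hσ0]; ring
    · have : ¬ j + k ≤ j := by omega
      simp [this, hσk]
  · intro i hi
    rcases lt_or_ge i j with h | h
    · have h1 : i + 1 ≤ j := h
      simp only [h.le, h1, if_pos]
      exact hτmono i h
    · have h1 : ¬ i + 1 ≤ j := by omega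
      have hik : i - j < k := by omega
      simp only [h1, if_neg, not_false_iff]
      have key : σ (i - j) < σ (i - j + 1) := hσmono _ hik
      rcases eq_or_lt_of_le h with he | hl
      · have : i ≤ j := he.symm.le
        simp only [this, if_pos]
        rw [← he, hτj]
        have h2 : j + 1 - j = 1 := by omega
        rw [h2]
        have h3 : i - j = 0 := by omega
        rw [h3, hσ0] at key
        have h4 : i - j + 1 = 1 := by omega
        norm_num at key
        linarith
      · have : ¬ i ≤ j := by omega
        simp only [this, if_neg, not_false_iff]
        have : i + 1 - j = i - j + 1 := by omega
        rw [this]; linarith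
  · intro i hi
    rcases lt_or_ge i j with h | h
    · have h1 : i + 1 ≤ j := h
      simp only [h, h1, h.le, if_pos]
      exact hτreach i h
    · have h1 : ¬ i + 1 ≤ j := by omega
      have h2 : ¬ i < j := by omega
      have hik : i - j < k := by omega
      have hlo : (if i ≤ j then τ i else T₁ + σ (i - j)) = T₁ + σ (i - j) := by
        rcases eq_or_lt_of_le h with he | hl
        · simp [he.symm.le, ← he, hτj, hσ0]
        · simp [show ¬ i ≤ j by omega]
      have hhi : i + 1 - j = i - j + 1 := by omega
      simp only [h1, h2, if_neg, not_false_iff, hlo, hhi]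
      intro x hx
      obtain ⟨x₀, hx₀, t, ht, hxe⟩ := hx
      have hσm : 0 ≤ σ (i - j) := hσnn _ hik.le
      have ht1 : 0 ≤ t - T₁ := by
        have := ht.1; linarith
      have hsplit : ξ x₀ p t = ξ (ξ x₀ p T₁) p (t - T₁) := by
        have := hsemi x₀ p T₁ (t - T₁) hT₁ ht1
        simpa using this
      apply hσreach _ hik
      refine ⟨ξ x₀ p T₁, hK₂ ⟨x₀, hx₀, T₁, ⟨le_refl _, le_refl _⟩, rfl⟩,
        t - T₁, ⟨by linarith [ht.1], by linarith [ht.2]⟩, ?_⟩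
      rw [hxe, hsplit]
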